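/- Let M be a 2-generated axial algebra of Majorana type (ξ,η) admitting a flip, over a field of characteristic not 2, with axes a_i and p_{i,j} = a_j a_{i+j} − η(a_i + a_{i+j}). Suppose the axial dimension D = 5, dim M = 5 (so M = Span{a_i}), and M satisfies an even relation a_3 + a_{−2} + α(a_2 + a_{−1}) + β(a_1 + a_0) = 0. Then p_1 = 0. -/

import Mathlib

/-- The `α`-eigenspace of the left-multiplication operator of `a`. -/
noncomputable def esp {F M : Type*} [Field F] [NonUnitalNonAssocCommRing M]
    [Module F M] [SMulCommClass F M M] [IsScalarTower F M M] (a : M) (α : F) :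
    Submodule F M :=
  Module.End.eigenspace (LinearMap.mul F M a) α

/-- An axis of Majorana type `(ξ,η)`: a primitive idempotent with semisimple
adjoint action, eigenvalues among `{1,0,ξ,η}`, obeying the fusion rule `F(ξ,η)`. -/
structure IsMajoranaAxis {F M : Type*} [Field F] [NonUnitalNonAssocCommRing M]
    [Module F M] [SMulCommClass F M M] [IsScalarTower F M M] (ξ η : F) (a : M) :
    Prop where
  idem : a * a = a
  prim : esp a (1 : F) = Submodule.span F {a}
  decomp : esp a (1 : F) ⊔ esp a (0 : F) ⊔ esp a ξ ⊔ esp a η = ⊤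
  fus00 : ∀ x ∈ esp a (0 : F), ∀ y ∈ esp a (0 : F), x * y ∈ esp a (0 : F)
  fus10 : ∀ x ∈ esp a (1 : F), ∀ y ∈ esp a (0 : F), x * y ∈ esp a (0 : F)
  fus0ξ : ∀ x ∈ esp a (0 : F), ∀ y ∈ esp a ξ, x * y ∈ esp a ξ
  fus0η : ∀ x ∈ esp a (0 : F), ∀ y ∈ esp a η, x * y ∈ esp a η
  fus1ξ : ∀ x ∈ esp a (1 : F), ∀ y ∈ esp a ξ, x * y ∈ esp a ξ
  fus1η : ∀ x ∈ esp a (1 : F), ∀ y ∈ esp a η, x * y ∈ esp a η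
  fusξξ : ∀ x ∈ esp a ξ, ∀ y ∈ esp a ξ, x * y ∈ esp a (0 : F) ⊔ esp a (1 : F)
  fusξη : ∀ x ∈ esp a ξ, ∀ y ∈ esp a η, x * y ∈ esp a η
  fusηη : ∀ x ∈ esp a η, ∀ y ∈ esp a η,
    x * y ∈ esp a (0 : F) ⊔ esp a (1 : F) ⊔ esp a ξ

/-- axial dimension 5 with `dim M = 5` and an even relation
`a₃ + a₋₂ + α(a₂ + a₋₁) + β(a₁ + a₀) = 0` forces `p₁ = 0`. -/
theorem stmt14 {F M : Type*} [Field F] [NonUnitalNonAssocCommRing M]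
    [Module F M] [SMulCommClass F M M] [IsScalarTower F M M]
    (hchar : (2 : F) ≠ 0) (ξ η : F)
    (hξ0 : ξ ≠ 0) (hξ1 : ξ ≠ 1) (hη0 : η ≠ 0) (hη1 : η ≠ 1) (hξη : ξ ≠ η)
    (a : ℤ → M) (haxes : ∀ i : ℤ, IsMajoranaAxis ξ η (a i))
    (hgen : NonUnitalAlgebra.adjoin F ({a 0, a 1} : Set M) = ⊤)
    (θ τ₀ : M ≃ₗ[F] M)
    (hθm : ∀ x y : M, θ (x * y) = θ x * θ y)
    (hτm : ∀ x y : M, τ₀ (x * y) = τ₀ x * τ₀ y)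
    (hθa : ∀ i : ℤ, θ (a i) = a (1 - i))
    (hτa : ∀ i : ℤ, τ₀ (a i) = a (-i))
    (hτeven : ∀ x ∈ esp (a 0) (1 : F) ⊔ esp (a 0) (0 : F) ⊔ esp (a 0) ξ, τ₀ x = x)
    (hτodd : ∀ x ∈ esp (a 0) η, τ₀ x = -x)
    (hD : Module.rank F ↥(Submodule.span F (Set.range a)) = 5)
    (hdim : Module.rank F M = 5)
    (α β : F) (hrel : a 3 + a (-2) + α • (a 2 + a (-1)) + β • (a 1 + a 0) = 0) :
    a 0 * a 1 - η • (a 0 + a 1) = 0 := by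
  classical
  set p : M := a 0 * a 1 - η • (a 0 + a 1) with hp_def
  -- the shift automorphism σ = θ ∘ τ₀ : a i ↦ a (i+1)
  set σ : M ≃ₗ[F] M := τ₀.trans θ with hσ_def
  have hσa : ∀ i : ℤ, σ (a i) = a (i + 1) := by
    intro i
    have : σ (a i) = θ (τ₀ (a i)) := rfl
    rw [this, hτa, hθa]
    norm_num [add_comm]
  have hσm : ∀ x y : M, σ (x * y) = σ x * σ y := by
    intro x y
    show θ (τ₀ (x * y)) = θ (τ₀ x) * θ (τ₀ y)
    rw [hτm, hθm]
  -- STEP 1: p lies in the even part of a 0, hence τ₀ p = p.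
  have hτp : τ₀ p = p := by
    obtain ⟨y, hy, x4, hx4, hy4⟩ := Submodule.mem_sup.mp
      (((haxes 0).decomp) ▸ Submodule.mem_top (x := a 1) :
        a 1 ∈ esp (a 0) (1:F) ⊔ esp (a 0) (0:F) ⊔ esp (a 0) ξ ⊔ esp (a 0) η)
    obtain ⟨z, hz, x3, hx3, hz3⟩ := Submodule.mem_sup.mp hy
    obtain ⟨x1, hx1, x2, hx2, hx12⟩ := Submodule.mem_sup.mp hz
    have ha1 : a 1 = x1 + x2 + x3 + x4 := by rw [← hy4, ← hz3, ← hx12]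
    have hm : ∀ (c : F) (x : M), x ∈ esp (a 0) c → a 0 * x = c • x := by
      intro c x hx
      have := Module.End.mem_eigenspace_iff.mp hx
      rwa [LinearMap.mul_apply'] at this
    have hm1 := hm 1 x1 hx1
    have hm2 := hm 0 x2 hx2
    have hm3 := hm ξ x3 hx3
    have hm4 := hm η x4 hx4
    rw [one_smul] at hm1
    rw [zero_smul] at hm2
    have ha0mem : a 0 ∈ esp (a 0) (1:F) := by
      have h0 : (LinearMap.mul F M (a 0)) (a 0) = (1:F) • a 0 := by
        rw [LinearMap.mul_apply', one_smul]; exact (haxes 0).idem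
      exact Module.End.mem_eigenspace_iff.mpr h0
    have hmul : a 0 * a 1 = x1 + 0 + ξ • x3 + η • x4 := by
      rw [ha1, mul_add, mul_add, mul_add, hm1, hm2, hm3, hm4]
    have hp_eq : p = (((1 - η) • x1 - η • a 0) + (-(η • x2))) + (ξ - η) • x3 := by
      rw [hp_def, hmul, ha1]
      module
    have hpE : p ∈ esp (a 0) (1:F) ⊔ esp (a 0) (0:F) ⊔ esp (a 0) ξ := by
      rw [hp_eq]
      refine Submodule.add_mem _ (Submodule.add_mem _ ?_ ?_) ?_
      · exact Submodule.mem_sup_left (Submodule.mem_sup_left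
          (sub_mem (Submodule.smul_mem _ _ hx1) (Submodule.smul_mem _ _ ha0mem)))
      · exact Submodule.mem_sup_left (Submodule.mem_sup_right
          (neg_mem (Submodule.smul_mem _ _ hx2)))
      · exact Submodule.mem_sup_right (Submodule.smul_mem _ _ hx3)
    exact hτeven p hpE
  -- STEP 2: θ p = p, hence σ p = p.
  have hθp : θ p = p := by
    rw [hp_def, map_sub, map_smul, map_add, hθm, hθa, hθa]
    norm_num [mul_comm, add_comm]
  have hσp : σ p = p := by
    show θ (τ₀ p) = p
    rw [hτp, hθp]
  -- STEP 3: shifted even relations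
  set L : ℤ → M := fun k =>
    a (k + 3) + a (k - 2) + α • (a (k + 2) + a (k - 1)) + β • (a (k + 1) + a k)
    with hL_def
  have hσL : ∀ k : ℤ, σ (L k) = L (k + 1) := by
    intro k
    simp only [hL_def, map_add, map_smul, hσa]
    ring_nf
  have hL : ∀ k : ℤ, L k = 0 := by
    intro k
    induction k using Int.induction_on with
    | zero =>
      have he : L 0 = a 3 + a (-2) + α • (a 2 + a (-1)) + β • (a 1 + a 0) := by
        simp only [hL_def]
        norm_num
      rw [he, hrel]
    | succ n ih => rw [← hσL, ih, map_zero]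
    | pred n ih =>
      have : σ (L (-n - 1)) = σ 0 := by
        rw [map_zero, hσL]
        convert ih using 2
        ring
      exact σ.injective this
  -- STEP 4: all axes lie in S = span of the five middle axes
  set S : Submodule F M := Submodule.span F ({a (-2), a (-1), a 0, a 1, a 2} : Set M)
    with hS_def
  have hbase : ∀ x ∈ ({a (-2), a (-1), a 0, a 1, a 2} : Set M), x ∈ S :=
    fun x hx => Submodule.subset_span hx
  have hcast : ∀ {i j : ℤ}, i = j → a i ∈ S → a j ∈ S := by
    intro i j h hi; rwa [h] at hi
  have hmem : ∀ k : ℤ, a (k - 2) ∈ S ∧ a (k - 1) ∈ S ∧ a k ∈ S ∧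
      a (k + 1) ∈ S ∧ a (k + 2) ∈ S := by
    intro k
    induction k using Int.induction_on with
    | zero =>
      have m1 : a (-2) ∈ S := hbase _ (Set.mem_insert _ _)
      have m2 : a (-1) ∈ S := hbase _ (Set.mem_insert_of_mem _ (Set.mem_insert _ _))
      have m3 : a 0 ∈ S := hbase _
        (Set.mem_insert_of_mem _ (Set.mem_insert_of_mem _ (Set.mem_insert _ _)))
      have m4 : a 1 ∈ S := hbase _ (Set.mem_insert_of_mem _ (Set.mem_insert_of_mem _
        (Set.mem_insert_of_mem _ (Set.mem_insert _ _))))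
      have m5 : a 2 ∈ S := hbase _ (Set.mem_insert_of_mem _ (Set.mem_insert_of_mem _
        (Set.mem_insert_of_mem _ (Set.mem_insert_of_mem _ rfl))))
      exact ⟨hcast (by norm_num) m1, hcast (by norm_num) m2, hcast (by norm_num) m3,
        hcast (by norm_num) m4, hcast (by norm_num) m5⟩
    | succ n ih =>
      obtain ⟨h1, h2, h3, h4, h5⟩ := ih
      have hnew : a ((n : ℤ) + 3) ∈ S := by
        have h := hL n
        have heq : a ((n : ℤ) + 3) =
            -(a ((n : ℤ) - 2) + α • (a ((n : ℤ) + 2) + a ((n : ℤ) - 1)) +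
              β • (a ((n : ℤ) + 1) + a (n : ℤ))) := by
          rw [hL_def] at h
          linear_combination (norm := module) h
        rw [heq]
        exact neg_mem (add_mem (add_mem h1 (Submodule.smul_mem _ _ (add_mem h5 h2)))
          (Submodule.smul_mem _ _ (add_mem h4 h3)))
      exact ⟨hcast (by ring) h2, hcast (by ring) h3, hcast (by ring) h4,
        hcast (by ring) h5, hcast (by ring) hnew⟩
    | pred n ih =>
      obtain ⟨h1, h2, h3, h4, h5⟩ := ih
      have hnew : a (-(n : ℤ) - 3) ∈ S := by
        have h := hL (-(n : ℤ) - 1)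
        rw [hL_def] at h
        simp only at h
        have heq : a (-(n : ℤ) - 3) =
            -(a (-(n : ℤ) - 1 + 3) + α • (a (-(n : ℤ) - 1 + 2) + a (-(n : ℤ) - 1 - 1)) +
              β • (a (-(n : ℤ) - 1 + 1) + a (-(n : ℤ) - 1))) := by
          have he : (-(n : ℤ) - 1 - 2) = -(n : ℤ) - 3 := by ring
          rw [he] at h
          linear_combination (norm := module) h
        rw [heq]
        exact neg_mem (add_mem (add_mem (hcast (by ring) h5)
          (Submodule.smul_mem _ _ (add_mem (hcast (by ring) h4) (hcast (by ring) h1))))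
          (Submodule.smul_mem _ _ (add_mem (hcast (by ring) h3) (hcast (by ring) h2))))
      exact ⟨hcast (by ring) hnew, hcast (by ring) h1, hcast (by ring) h2,
        hcast (by ring) h3, hcast (by ring) h4⟩
  have hall : ∀ j : ℤ, a j ∈ S := fun j => (hmem j).2.2.1
  -- STEP 5: finite-dimensionality and S = ⊤
  have hfin : FiniteDimensional F M := by
    have : Module.Finite F M := Module.rank_lt_aleph0_iff.mp
      (by rw [hdim]; exact Cardinal.nat_lt_aleph0 5)
    exact this
  have hfr : Module.finrank F M = 5 := Module.finrank_eq_of_rank_eq hdim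
  have hfrS : Module.finrank F ↥(Submodule.span F (Set.range a)) = 5 :=
    Module.finrank_eq_of_rank_eq hD
  have htop : Submodule.span F (Set.range a) = ⊤ :=
    Submodule.eq_top_of_finrank_eq (by rw [hfrS, hfr])
  have hStop : S = ⊤ := by
    rw [eq_top_iff, ← htop]
    exact Submodule.span_le.mpr (Set.range_subset_iff.mpr hall)
  -- STEP 6: the five middle axes form a basis
  set b : Fin 5 → M := ![a (-2), a (-1), a 0, a 1, a 2] with hb_def
  have hbspan : ⊤ ≤ Submodule.span F (Set.range b) := by
    rw [← hStop, hS_def]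
    refine Submodule.span_le.mpr ?_
    intro x hx
    rcases hx with h | h | h | h | h
    · exact Submodule.subset_span ⟨0, h.symm⟩
    · exact Submodule.subset_span ⟨1, h.symm⟩
    · exact Submodule.subset_span ⟨2, h.symm⟩
    · exact Submodule.subset_span ⟨3, h.symm⟩
    · exact Submodule.subset_span ⟨4, h.symm⟩
  have hcard : Fintype.card (Fin 5) = Module.finrank F M := by rw [hfr]; rfl
  set B := basisOfTopLeSpanOfCardEqFinrank b hbspan hcard with hB_def
  have hBcoe : ⇑B = b := coe_basisOfTopLeSpanOfCardEqFinrank b hbspan hcard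
  have hli : LinearIndependent F b := hBcoe ▸ B.linearIndependent
  have hli' := Fintype.linearIndependent_iff.mp hli
  set c : Fin 5 → F := fun j => B.repr p j with hc_def
  have hp1 : p = c 0 • a (-2) + c 1 • a (-1) + c 2 • a 0 + c 3 • a 1 + c 4 • a 2 := by
    have := B.sum_repr p
    rw [Fin.sum_univ_five] at this
    simp only [hBcoe, hb_def] at this
    rw [← this]
    rfl
  -- τ₀ equation : c 0 = c 4, c 1 = c 3
  have hτeq : c 0 • a 2 + c 1 • a 1 + c 2 • a 0 + c 3 • a (-1) + c 4 • a (-2) = p := by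
    rw [← hτp, hp1]
    rw [map_add, map_add, map_add, map_add, map_smul, map_smul, map_smul, map_smul,
      map_smul, hτa, hτa, hτa, hτa, hτa]
    norm_num
  have hg1 : ∀ i, (![c 0 - c 4, c 1 - c 3, 0, c 3 - c 1, c 4 - c 0] : Fin 5 → F) i = 0 := by
    apply hli'
    rw [Fin.sum_univ_five]
    simp only [hb_def, Matrix.cons_val_zero, Matrix.cons_val_one, Matrix.head_cons,
      Matrix.cons_val_two, Matrix.tail_cons, Matrix.cons_val_three, Matrix.cons_val_four]
    have := hτeq.trans hp1
    linear_combination (norm := module) -this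
  have hc04 : c 0 = c 4 := by have := hg1 0; simpa [sub_eq_zero] using this
  have hc13 : c 1 = c 3 := by have := hg1 1; simpa [sub_eq_zero] using this
  -- σ equation
  have ha3 : a 3 = -(a (-2) + α • (a 2 + a (-1)) + β • (a 1 + a 0)) := by
    linear_combination (norm := module) hrel
  have hσeq : c 0 • a (-1) + c 1 • a 0 + c 2 • a 1 + c 3 • a 2 +
      c 4 • (-(a (-2) + α • (a 2 + a (-1)) + β • (a 1 + a 0))) = p := by
    rw [← ha3, ← hσp, hp1]
    rw [map_add, map_add, map_add, map_add, map_smul, map_smul, map_smul, map_smul,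
      map_smul, hσa, hσa, hσa, hσa, hσa]
    norm_num
  have hg2 : ∀ i, (![c 0 + c 4, c 1 - c 0 + c 4 * α, c 2 - c 1 + c 4 * β,
      c 3 - c 2 + c 4 * β, c 4 - c 3 + c 4 * α] : Fin 5 → F) i = 0 := by
    apply hli'
    rw [Fin.sum_univ_five]
    simp only [hb_def, Matrix.cons_val_zero, Matrix.cons_val_one, Matrix.head_cons,
      Matrix.cons_val_two, Matrix.tail_cons, Matrix.cons_val_three, Matrix.cons_val_four]
    have := hσeq.trans hp1
    linear_combination (norm := module) -this
  have hc4 : c 4 = 0 := by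
    have h0 := hg2 0
    simp only [Matrix.cons_val_zero] at h0
    rw [hc04] at h0
    have h2 : (2 : F) * c 4 = 0 := by linear_combination h0
    exact (mul_eq_zero.mp h2).resolve_left hchar
  have hc0 : c 0 = 0 := hc04.trans hc4
  have hc1 : c 1 = 0 := by
    have h1 := hg2 1
    simp only [Matrix.cons_val_one, Matrix.head_cons, Matrix.cons_val_zero] at h1
    linear_combination h1 + hc0 - α * hc4
  have hc3 : c 3 = 0 := hc13.symm.trans hc1
  have hc2 : c 2 = 0 := by
    have h2 := hg2 2
    simp only [Matrix.cons_val_two, Matrix.tail_cons, Matrix.head_cons] at h2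
    linear_combination h2 + hc1 - β * hc4
  show p = 0
  rw [hp1, hc0, hc1, hc2, hc3, hc4]
  simp
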